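/- Suppose δ > 0 and 3 ≤ L < (64δ)^{−1/2}. Then P(χ(Γ) = 0) > 0. -/

import Mathlib

open scoped Classical

noncomputable section

/-- `α(C)`: the smallest element of a cluster. -/
def clAlpha (c : Finset ℕ) : ℕ := sInf (↑c : Set ℕ)

/-- `ω(C)`: the largest element of a cluster. -/
def clOmega (c : Finset ℕ) : ℕ := sSup (↑c : Set ℕ)

/-- Euclidean distance between two finite subsets of `ℤ₊`. -/
def clDist (a b : Finset ℕ) : ℕ :=
  sInf {d : ℕ | ∃ x ∈ a, ∃ y ∈ b, d = max x y - min x y}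

/-- A maximal `(k+1)`-run among a family `F` of clusters: at least two consecutive members
of `F`, successive ones at Euclidean distance `< L^(k+1)`, maximal in the sense that the
member of `F` immediately preceding (resp. following) the run, if any, is at distance
`≥ L^(k+1)`. -/
structure MaxRun (L k : ℕ) (F : Set (Finset ℕ)) where
  n : ℕ
  c : ℕ → Finset ℕ
  two_le : 2 ≤ n
  mem : ∀ i, i < n → c i ∈ F
  ordered : ∀ i, i + 1 < n → clOmega (c i) < clAlpha (c (i + 1))
  consecutive : ∀ i, i + 1 < n → ∀ b ∈ F,
    ¬(clOmega (c i) < clAlpha b ∧ clOmega b < clAlpha (c (i + 1)))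
  close : ∀ i, i + 1 < n → clDist (c i) (c (i + 1)) < L ^ (k + 1)
  max_below : ∀ b ∈ F, clOmega b < clAlpha (c 0) →
    (∀ b' ∈ F, ¬(clOmega b < clAlpha b' ∧ clOmega b' < clAlpha (c 0))) →
    L ^ (k + 1) ≤ clDist b (c 0)
  max_above : ∀ b ∈ F, clOmega (c (n - 1)) < clAlpha b →
    (∀ b' ∈ F, ¬(clOmega (c (n - 1)) < clAlpha b' ∧ clOmega b' < clAlpha b)) →
    L ^ (k + 1) ≤ clDist (c (n - 1)) b

/-- The span of a run: the smallest integer interval containing all of its constituents. -/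
def MaxRun.spanIcc {L k : ℕ} {F : Set (Finset ℕ)} (R : MaxRun L k F) : Finset ℕ :=
  Finset.Icc (clAlpha (R.c 0)) (clOmega (R.c (R.n - 1)))

/-- The cluster of level `k+1` produced by a maximal `(k+1)`-run: `span(run) ∩ Γ`. -/
def MaxRun.cluster {L k : ℕ} {F : Set (Finset ℕ)} (Γ : Set ℕ) (R : MaxRun L k F) : Finset ℕ :=
  R.spanIcc.filter (fun x => x ∈ Γ)

/-- The mass of the cluster produced by a run with constituent masses `m₁, …, m_n`:
`m₁ + ∑_{s=2}^n (m_s − k)`. -/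
def MaxRun.newMass {L k : ℕ} {F : Set (Finset ℕ)} (mass : Finset ℕ → ℕ) (R : MaxRun L k F) : ℕ :=
  mass (R.c 0) + ∑ i ∈ Finset.Ico 1 R.n, (mass (R.c i) - k)

/-- The recursive cluster hierarchy over the environment `Γ ⊆ ℤ₊` with parameter `L`:
`C 0` is the partition of `Γ` into singletons of mass one; `C (k+1)` consists of the
clusters produced by the maximal `(k+1)`-runs of clusters of `C k` of mass at least `k+1`,
together with the clusters of `C k` disjoint from the spans of all such runs. -/
structure ClusterHierarchy (L : ℕ) (Γ : Set ℕ) where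
  C : ℕ → Set (Finset ℕ)
  mass : Finset ℕ → ℕ
  C_zero : C 0 = {s | ∃ x ∈ Γ, s = {x}}
  mass_zero : ∀ x ∈ Γ, mass ({x} : Finset ℕ) = 1
  mem_succ : ∀ k c, c ∈ C (k + 1) ↔
    ((∃ R : MaxRun L k {b | b ∈ C k ∧ k + 1 ≤ mass b}, c = R.cluster Γ) ∨
     (c ∈ C k ∧ ∀ R : MaxRun L k {b | b ∈ C k ∧ k + 1 ≤ mass b},
        ∀ x ∈ c, x ∉ R.spanIcc))
  mass_succ : ∀ k (R : MaxRun L k {b | b ∈ C k ∧ k + 1 ≤ mass b}),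
    mass (R.cluster Γ) = R.newMass mass

namespace ClusterHierarchy

variable {L : ℕ} {Γ : Set ℕ}

/-- `c` is a cluster of the hierarchy. -/
def IsCluster (H : ClusterHierarchy L Γ) (c : Finset ℕ) : Prop := ∃ k, c ∈ H.C k

/-- The level `ℓ(C)` of a cluster: the smallest `k` with `C ∈ C_k`. -/
def level (H : ClusterHierarchy L Γ) (c : Finset ℕ) : ℕ := sInf {k | c ∈ H.C k}

/-- The set of levels of clusters containing `x`; `κ(x)` is its supremum. -/
def kappaSet (H : ClusterHierarchy L Γ) (x : ℕ) : Set ℕ :=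
  {ℓ | ∃ c, H.IsCluster c ∧ H.level c = ℓ ∧ x ∈ c}

/-- The limiting partition `C_∞`: the maximal clusters, i.e. clusters which are not met
by any cluster of strictly larger level. -/
def Cinf (H : ClusterHierarchy L Γ) : Set (Finset ℕ) :=
  {c | H.IsCluster c ∧
    ∀ c', H.IsCluster c' → (∃ x, x ∈ c ∧ x ∈ c') → H.level c' ≤ H.level c}

end ClusterHierarchy

end

open MeasureTheory ProbabilityTheory
open scoped ENNReal


section ChainCert

/-- least `k` with `d ≤ L^(k+1)` -/
noncomputable def fexp (L d : ℕ) : ℕ := sInf {k | d ≤ L ^ (k + 1)}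

lemma fexp_nonempty {L : ℕ} (hL : 2 ≤ L) (d : ℕ) : {k | d ≤ L ^ (k + 1)}.Nonempty := by
  refine ⟨d, ?_⟩
  have h1 : d < 2 ^ d := Nat.lt_two_pow_self
  have h2 : (2:ℕ) ^ d ≤ L ^ d := Nat.pow_le_pow_left hL d
  have h3 : L ^ d ≤ L ^ (d + 1) := Nat.pow_le_pow_right (by omega) (by omega)
  simp only [Set.mem_setOf_eq]
  omega

lemma fexp_le {L d k : ℕ} (h : d ≤ L ^ (k + 1)) : fexp L d ≤ k := Nat.sInf_le h

lemma le_pow_fexp {L : ℕ} (hL : 2 ≤ L) (d : ℕ) : d ≤ L ^ (fexp L d + 1) :=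
  Nat.sInf_mem (fexp_nonempty hL d)

/-- A chain certificate: `N` points of `Γ` starting at `a`, ending at `b`, strictly
increasing, whose gap-scales sum with `m` to at most `N`. -/
def NChain (L : ℕ) (Γ : Set ℕ) (m a b : ℕ) : Prop :=
  ∃ (N : ℕ) (y : ℕ → ℕ), 0 < N ∧ y 0 = a ∧ y (N - 1) = b ∧ (∀ i, i < N → y i ∈ Γ) ∧
    (∀ i, i + 1 < N → y i < y (i + 1)) ∧
    m + ∑ i ∈ Finset.range (N - 1), fexp L (y (i + 1) - y i) ≤ N

lemma nchain_singleton {L : ℕ} {Γ : Set ℕ} {x : ℕ} (hx : x ∈ Γ) : NChain L Γ 1 x x :=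
  ⟨1, fun _ => x, one_pos, rfl, rfl, fun _ _ => hx, fun i h => absurd h (by omega), by simp⟩

lemma nchain_facts {L : ℕ} {Γ : Set ℕ} {m a b : ℕ} (h : NChain L Γ m a b) :
    a ≤ b ∧ a ∈ Γ ∧ b ∈ Γ := by
  obtain ⟨N, y, hN, h0, he, hΓ, hmono, _⟩ := h
  have mono : ∀ i, i < N → y 0 ≤ y i := by
    intro i
    induction i with
    | zero => intro _; exact le_refl _
    | succ i ih =>
      intro hi
      have h1 := hmono i (by omega)
      have h2 := ih (by omega)
      omega
  refine ⟨?_, ?_, ?_⟩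
  · rw [← h0, ← he]; exact mono _ (by omega)
  · rw [← h0]; exact hΓ 0 hN
  · rw [← he]; exact hΓ _ (by omega)

lemma nchain_glue {L : ℕ} {Γ : Set ℕ} {k m₁ a₁ b₁ m₂ a₂ b₂ : ℕ}
    (h1 : NChain L Γ m₁ a₁ b₁) (h2 : NChain L Γ m₂ a₂ b₂)
    (hlt : b₁ < a₂) (hgap : a₂ ≤ b₁ + L ^ (k + 1)) (hm2 : k + 1 ≤ m₂) :
    NChain L Γ (m₁ + (m₂ - k)) a₁ b₂ := by
  obtain ⟨N₁, y₁, hN₁, hy₁0, hy₁e, hy₁Γ, hy₁m, hy₁s⟩ := h1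
  obtain ⟨N₂, y₂, hN₂, hy₂0, hy₂e, hy₂Γ, hy₂m, hy₂s⟩ := h2
  set y : ℕ → ℕ := fun i => if i < N₁ then y₁ i else y₂ (i - N₁) with hy
  refine ⟨N₁ + N₂, y, by omega, ?_, ?_, ?_, ?_, ?_⟩
  · simp only [hy, if_pos hN₁]; exact hy₁0
  · have h' : ¬ (N₁ + N₂ - 1 < N₁) := by omega
    simp only [hy, if_neg h']
    rw [show N₁ + N₂ - 1 - N₁ = N₂ - 1 by omega]; exact hy₂e
  · intro i hi
    by_cases h : i < N₁
    · simp only [hy, if_pos h]; exact hy₁Γ i h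
    · simp only [hy, if_neg h]; exact hy₂Γ _ (by omega)
  · intro i hi
    by_cases hA : i + 1 < N₁
    · simp only [hy, if_pos hA, if_pos (by omega : i < N₁)]; exact hy₁m i hA
    · by_cases hB : i < N₁
      · have hi1 : i = N₁ - 1 := by omega
        simp only [hy, if_pos hB, if_neg hA]
        rw [show i + 1 - N₁ = 0 by omega, hy₂0, hi1, hy₁e]; exact hlt
      · simp only [hy, if_neg hB, if_neg (by omega : ¬ (i + 1 < N₁))]
        rw [show i + 1 - N₁ = (i - N₁) + 1 by omega]
        exact hy₂m (i - N₁) (by omega)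
  · -- the sum bound
    have e1 : N₁ + N₂ - 1 = N₁ + (N₂ - 1) := by omega
    rw [e1, Finset.sum_range_add]
    have e2 : ∑ i ∈ Finset.range N₁, fexp L (y (i + 1) - y i)
        = ∑ i ∈ Finset.range (N₁ - 1), fexp L (y (i + 1) - y i)
          + fexp L (y (N₁ - 1 + 1) - y (N₁ - 1)) := by
      rw [← Finset.sum_range_succ]
      conv_lhs => rw [show N₁ = N₁ - 1 + 1 by omega]
    rw [e2]
    have t1 : ∑ i ∈ Finset.range (N₁ - 1), fexp L (y (i + 1) - y i)
        = ∑ i ∈ Finset.range (N₁ - 1), fexp L (y₁ (i + 1) - y₁ i) := by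
      apply Finset.sum_congr rfl
      intro i hi
      have hi' := Finset.mem_range.1 hi
      simp only [hy, if_pos (by omega : i + 1 < N₁), if_pos (by omega : i < N₁)]
    have t2 : fexp L (y (N₁ - 1 + 1) - y (N₁ - 1)) ≤ k := by
      have e3 : N₁ - 1 + 1 = N₁ := by omega
      rw [e3]
      simp only [hy, if_neg (lt_irrefl N₁), if_pos (by omega : N₁ - 1 < N₁)]
      rw [Nat.sub_self, hy₂0, hy₁e]
      exact fexp_le (by omega)
    have t3 : ∑ i ∈ Finset.range (N₂ - 1), fexp L (y (N₁ + i + 1) - y (N₁ + i))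
        = ∑ i ∈ Finset.range (N₂ - 1), fexp L (y₂ (i + 1) - y₂ i) := by
      apply Finset.sum_congr rfl
      intro i _
      simp only [hy, if_neg (by omega : ¬ (N₁ + i + 1 < N₁)), if_neg (by omega : ¬ (N₁ + i < N₁))]
      rw [show N₁ + i + 1 - N₁ = i + 1 by omega, show N₁ + i - N₁ = i by omega]
    rw [t1, t3]
    omega

end ChainCert

section ClusterFacts

lemma nat_sInf_eq {s : Set ℕ} {a : ℕ} (h : a ∈ s) (h2 : ∀ z ∈ s, a ≤ z) : sInf s = a :=
  le_antisymm (Nat.sInf_le h) (h2 _ (Nat.sInf_mem ⟨a, h⟩))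

lemma nat_sSup_eq {s : Set ℕ} {a : ℕ} (h : a ∈ s) (h2 : ∀ z ∈ s, z ≤ a) : sSup s = a :=
  le_antisymm (csSup_le ⟨a, h⟩ h2) (le_csSup ⟨a, h2⟩ h)

lemma clAlpha_mem {c : Finset ℕ} (h : c.Nonempty) : clAlpha c ∈ c := by
  have : sInf (↑c : Set ℕ) ∈ (↑c : Set ℕ) := Nat.sInf_mem (by exact_mod_cast h.to_set)
  exact_mod_cast this

lemma clAlpha_le {c : Finset ℕ} {x : ℕ} (h : x ∈ c) : clAlpha c ≤ x :=
  Nat.sInf_le (by exact_mod_cast h)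

lemma clOmega_mem {c : Finset ℕ} (h : c.Nonempty) : clOmega c ∈ c := by
  have : sSup (↑c : Set ℕ) ∈ (↑c : Set ℕ) :=
    Nat.sSup_mem (by exact_mod_cast h.to_set) c.finite_toSet.bddAbove
  exact_mod_cast this

lemma le_clOmega {c : Finset ℕ} {x : ℕ} (h : x ∈ c) : x ≤ clOmega c :=
  le_csSup c.finite_toSet.bddAbove (by exact_mod_cast h)

lemma clAlpha_finset_eq {c : Finset ℕ} {a : ℕ} (h : a ∈ c) (h2 : ∀ z ∈ c, a ≤ z) :
    clAlpha c = a :=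
  nat_sInf_eq (by exact_mod_cast h) (by intro z hz; exact h2 z (by exact_mod_cast hz))

lemma clOmega_finset_eq {c : Finset ℕ} {a : ℕ} (h : a ∈ c) (h2 : ∀ z ∈ c, z ≤ a) :
    clOmega c = a :=
  nat_sSup_eq (by exact_mod_cast h) (by intro z hz; exact h2 z (by exact_mod_cast hz))

lemma clDist_of_ordered {a b : Finset ℕ} (ha : a.Nonempty) (hb : b.Nonempty)
    (h : clOmega a < clAlpha b) : clDist a b = clAlpha b - clOmega a := by
  apply nat_sInf_eq
  · refine ⟨clOmega a, clOmega_mem ha, clAlpha b, clAlpha_mem hb, ?_⟩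
    rw [max_eq_right h.le, min_eq_left h.le]
  · rintro z ⟨x, hx, y, hy, rfl⟩
    have hx' : x ≤ clOmega a := le_clOmega hx
    have hy' : clAlpha b ≤ y := clAlpha_le hy
    have hxy : x ≤ y := by omega
    rw [max_eq_right hxy, min_eq_left hxy]
    omega

lemma clDist_zero {c : Finset ℕ} (hc : c.Nonempty) : clDist c {0} = clAlpha c := by
  unfold clDist clAlpha
  congr 1
  ext z
  simp only [Set.mem_setOf_eq, Finset.mem_singleton, Finset.mem_coe]
  constructor
  · rintro ⟨x, hx, y, rfl, rfl⟩
    simpa [Nat.max_eq_left (Nat.zero_le x), Nat.min_eq_right (Nat.zero_le x)] using hx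
  · intro hz
    exact ⟨z, hz, 0, rfl, by simp⟩

/-- Every cluster of the hierarchy carries a chain certificate. -/
lemma cluster_nchain {L : ℕ} {Γ : Set ℕ} (hL : 2 ≤ L) (H : ClusterHierarchy L Γ) :
    ∀ j c, c ∈ H.C j →
      c.Nonempty ∧ (∀ x ∈ c, x ∈ Γ) ∧ NChain L Γ (H.mass c) (clAlpha c) (clOmega c) := by
  intro j
  induction j with
  | zero =>
    intro c hc
    rw [H.C_zero] at hc
    obtain ⟨x, hx, rfl⟩ := hc
    have hα : clAlpha ({x} : Finset ℕ) = x :=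
      clAlpha_finset_eq (Finset.mem_singleton_self x) (by intro z hz; rw [Finset.mem_singleton] at hz; omega)
    have hω : clOmega ({x} : Finset ℕ) = x :=
      clOmega_finset_eq (Finset.mem_singleton_self x) (by intro z hz; rw [Finset.mem_singleton] at hz; omega)
    refine ⟨⟨x, Finset.mem_singleton_self x⟩, ?_, ?_⟩
    · intro z hz; rw [Finset.mem_singleton] at hz; subst hz; exact hx
    · rw [H.mass_zero x hx, hα, hω]; exact nchain_singleton hx
  | succ k ih =>
    intro c hc
    rw [H.mem_succ] at hc
    rcases hc with ⟨R, rfl⟩ | ⟨hc, _⟩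
    · -- run case
      have hcon : ∀ i, i < R.n → R.c i ∈ H.C k ∧ k + 1 ≤ H.mass (R.c i) := by
        intro i hi
        exact R.mem i hi
      have hIH : ∀ i, i < R.n →
          (R.c i).Nonempty ∧ (∀ x ∈ R.c i, x ∈ Γ) ∧
            NChain L Γ (H.mass (R.c i)) (clAlpha (R.c i)) (clOmega (R.c i)) :=
        fun i hi => ih _ (hcon i hi).1
      have key : ∀ s, s < R.n →
          NChain L Γ (H.mass (R.c 0) + ∑ i ∈ Finset.Ico 1 (s + 1), (H.mass (R.c i) - k))
            (clAlpha (R.c 0)) (clOmega (R.c s)) := by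
        intro s
        induction s with
        | zero =>
          intro hs
          simpa using (hIH 0 (by omega)).2.2
        | succ s ihs =>
          intro hs
          have hchain := ihs (by omega)
          have h2 := (hIH (s + 1) hs).2.2
          have hord := R.ordered s hs
          have hclose := R.close s hs
          have hdist : clDist (R.c s) (R.c (s + 1))
              = clAlpha (R.c (s + 1)) - clOmega (R.c s) :=
            clDist_of_ordered (hIH s (by omega)).1 (hIH (s + 1) hs).1 hord
          have hgap : clAlpha (R.c (s + 1)) ≤ clOmega (R.c s) + L ^ (k + 1) := by omega
          have hglue := nchain_glue hchain h2 hord hgap (hcon (s + 1) hs).2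
          have hsum : H.mass (R.c 0) + ∑ i ∈ Finset.Ico 1 (s + 1 + 1), (H.mass (R.c i) - k)
              = H.mass (R.c 0) + ∑ i ∈ Finset.Ico 1 (s + 1), (H.mass (R.c i) - k)
                + (H.mass (R.c (s + 1)) - k) := by
            rw [Finset.sum_Ico_succ_top (by omega : 1 ≤ s + 1)]
            omega
          rw [hsum]
          exact hglue
      have hn := R.two_le
      have hmain := key (R.n - 1) (by omega)
      rw [show R.n - 1 + 1 = R.n by omega] at hmain
      have hfacts := nchain_facts hmain
      set a := clAlpha (R.c 0) with ha
      set b := clOmega (R.c (R.n - 1)) with hb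
      have hmem_a : a ∈ R.cluster Γ := by
        unfold MaxRun.cluster MaxRun.spanIcc
        rw [Finset.mem_filter, Finset.mem_Icc]
        exact ⟨⟨le_refl _, hfacts.1⟩, hfacts.2.1⟩
      have hmem_b : b ∈ R.cluster Γ := by
        unfold MaxRun.cluster MaxRun.spanIcc
        rw [Finset.mem_filter, Finset.mem_Icc]
        exact ⟨⟨hfacts.1, le_refl _⟩, hfacts.2.2⟩
      have hsub : ∀ x ∈ R.cluster Γ, x ∈ Γ := by
        intro x hx
        unfold MaxRun.cluster at hx
        exact (Finset.mem_filter.1 hx).2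
      have hbound : ∀ z ∈ R.cluster Γ, a ≤ z ∧ z ≤ b := by
        intro z hz
        unfold MaxRun.cluster MaxRun.spanIcc at hz
        rw [Finset.mem_filter, Finset.mem_Icc] at hz
        exact hz.1
      have hαc : clAlpha (R.cluster Γ) = a :=
        clAlpha_finset_eq hmem_a (fun z hz => (hbound z hz).1)
      have hωc : clOmega (R.cluster Γ) = b :=
        clOmega_finset_eq hmem_b (fun z hz => (hbound z hz).2)
      refine ⟨⟨a, hmem_a⟩, hsub, ?_⟩
      rw [hαc, hωc, H.mass_succ k R]
      unfold MaxRun.newMass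
      exact hmain
    · exact ih c hc

end ClusterFacts


section Prob

open MeasureTheory ProbabilityTheory
open scoped ENNReal
open scoped ENNReal

/-- Parameters of a chain certificate: number of gaps, mass, starting point, gap vector. -/
abbrev ChainPar : Type := Σ n : ℕ, ℕ × ℕ × (Fin n → ℕ)

/-- The `j`-th gap. -/
def cgap {n : ℕ} (v : Fin n → ℕ) (j : ℕ) : ℕ := if h : j < n then v ⟨j, h⟩ else 1

/-- The `i`-th point of the chain with starting point `a` and gaps `v`. -/
def cpt (a : ℕ) {n : ℕ} (v : Fin n → ℕ) (i : ℕ) : ℕ := a + ∑ j ∈ Finset.range i, cgap v j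

/-- Admissibility of a chain parameter for scale `L`. -/
def AdmPar (L : ℕ) (p : ChainPar) : Prop :=
  (∀ j : Fin p.1, 1 ≤ p.2.2.2 j) ∧ p.2.2.1 < L ^ p.2.1 ∧
    p.2.1 + ∑ j ∈ Finset.range p.1, fexp L (cgap p.2.2.2 j) ≤ p.1 + 1

variable {Ω : Type} [MeasurableSpace Ω]

/-- The event that the whole chain lies in `Γ`. -/
noncomputable def cev (ξ : ℕ → Ω → Bool) (L : ℕ) (p : ChainPar) : Set Ω :=
  if AdmPar L p then {ω | ∀ i ≤ p.1, ξ (cpt p.2.2.1 p.2.2.2 i) ω = true} else ∅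

lemma cev_measurable (ξ : ℕ → Ω → Bool) (hmeas : ∀ i, Measurable (ξ i)) (L : ℕ)
    (p : ChainPar) : MeasurableSet (cev ξ L p) := by
  unfold cev
  split
  · have : {ω | ∀ i ≤ p.1, ξ (cpt p.2.2.1 p.2.2.2 i) ω = true}
        = ⋂ (i : ℕ) (_ : i ≤ p.1), (ξ (cpt p.2.2.1 p.2.2.2 i)) ⁻¹' {true} := by
      ext ω
      simp [Set.mem_iInter]
    rw [this]
    exact MeasurableSet.iInter fun i => MeasurableSet.iInter fun _ =>
      (hmeas _) (measurableSet_singleton _)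
  · exact MeasurableSet.empty

lemma good_of_not_bad {L : ℕ} (hL : 2 ≤ L) (ξ : ℕ → Ω → Bool) (ω : Ω)
    (hω : ∀ p : ChainPar, ω ∉ cev ξ L p) :
    ∀ H : ClusterHierarchy L {x | ξ x ω = true}, ∀ c ∈ H.Cinf,
      L ^ H.mass c ≤ clDist c {0} := by
  intro H c hc
  by_contra hlt
  push_neg at hlt
  obtain ⟨⟨k, hck⟩, -⟩ := hc
  obtain ⟨hne, hsub, hchain⟩ := cluster_nchain hL H k c hck
  obtain ⟨N, y, hN, h0, he, hΓ, hmono, hsum⟩ := hchain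
  have ha : clAlpha c < L ^ H.mass c := by rw [← clDist_zero hne]; exact hlt
  have hgapv : ∀ j : ℕ, j < N - 1 →
      cgap (fun j : Fin (N - 1) => y (j.1 + 1) - y j.1) j = y (j + 1) - y j := by
    intro j hj
    simp only [cgap, dif_pos hj]
  have hpt : ∀ i, i ≤ N - 1 →
      cpt (clAlpha c) (fun j : Fin (N - 1) => y (j.1 + 1) - y j.1) i = y i := by
    intro i
    induction i with
    | zero =>
      intro _
      simp [cpt, h0]
    | succ i ih =>
      intro hi
      have hyi : y i < y (i + 1) := hmono i (by omega)
      have := ih (by omega)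
      simp only [cpt, Finset.sum_range_succ] at this ⊢
      rw [hgapv i (by omega)]
      omega
  apply hω ⟨N - 1, H.mass c, clAlpha c, fun j : Fin (N - 1) => y (j.1 + 1) - y j.1⟩
  have hadm : AdmPar L
      ⟨N - 1, H.mass c, clAlpha c, fun j : Fin (N - 1) => y (j.1 + 1) - y j.1⟩ := by
    show (∀ j : Fin (N - 1), 1 ≤ y (j.1 + 1) - y j.1) ∧ clAlpha c < L ^ H.mass c ∧
      H.mass c + ∑ j ∈ Finset.range (N - 1),
        fexp L (cgap (fun j : Fin (N - 1) => y (j.1 + 1) - y j.1) j) ≤ N - 1 + 1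
    refine ⟨?_, ha, ?_⟩
    · intro j
      have hj : j.1 < N - 1 := j.2
      have := hmono j.1 (by omega)
      omega
    · have hsum' : ∑ j ∈ Finset.range (N - 1),
          fexp L (cgap (fun j : Fin (N - 1) => y (j.1 + 1) - y j.1) j)
          = ∑ i ∈ Finset.range (N - 1), fexp L (y (i + 1) - y i) := by
        apply Finset.sum_congr rfl
        intro j hj
        rw [hgapv j (Finset.mem_range.1 hj)]
      rw [hsum']
      omega
  unfold cev
  rw [if_pos hadm]
  show ω ∈ {ω | ∀ i ≤ N - 1,
    ξ (cpt (clAlpha c) (fun j : Fin (N - 1) => y (j.1 + 1) - y j.1) i) ω = true}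
  intro i hi
  have hyi := hΓ i (by omega)
  have hpt' := hpt i hi
  rw [hpt']
  exact hyi

lemma cev_meas {L : ℕ} (μ : Measure Ω) [IsProbabilityMeasure μ] (ξ : ℕ → Ω → Bool)
    (hindep : iIndepFun ξ μ) (D : ℝ≥0∞)
    (hlaw : ∀ i, μ {ω | ξ i ω = true} = D) (p : ChainPar) :
    μ (cev ξ L p) ≤ D ^ (p.1 + 1) := by
  unfold cev
  split
  case isTrue hadm =>
    obtain ⟨n, m, a, v⟩ := p
    simp only at hadm ⊢
    have hmono : ∀ i j : ℕ, i < j → j ≤ n → cpt a v i < cpt a v j := by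
      intro i j hij hj
      induction j with
      | zero => omega
      | succ j ih =>
        have hstep : cpt a v j < cpt a v (j + 1) := by
          simp only [cpt, Finset.sum_range_succ]
          have h1 : 1 ≤ cgap v j := by
            have hj' : j < n := by omega
            simp only [cgap, dif_pos hj']
            exact hadm.1 ⟨j, hj'⟩
          omega
        rcases Nat.lt_or_ge i j with h | h
        · exact lt_trans (ih h (by omega)) hstep
        · have hij' : i = j := by omega
          subst hij'
          exact hstep
    have hinj : Set.InjOn (cpt a v) ↑(Finset.range (n + 1)) := by
      intro i hi j hj hij
      simp only [Finset.coe_range, Set.mem_Iio] at hi hj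
      by_contra hne
      rcases Nat.lt_or_ge i j with h | h
      · exact absurd hij (Nat.ne_of_lt (hmono i j h (by omega)))
      · have h' : j < i := by omega
        exact absurd hij.symm (Nat.ne_of_lt (hmono j i h' (by omega)))
    have hset : {ω | ∀ i ≤ n, ξ (cpt a v i) ω = true}
        = ⋂ x ∈ (Finset.range (n + 1)).image (cpt a v), (ξ x) ⁻¹' {true} := by
      ext ω
      simp only [Set.mem_setOf_eq, Set.mem_iInter, Finset.mem_image, Finset.mem_range,
        Set.mem_preimage, Set.mem_singleton_iff]
      constructor
      · rintro h x ⟨i, hi, rfl⟩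
        exact h i (by omega)
      · intro h i hi
        exact h (cpt a v i) ⟨i, by omega, rfl⟩
    rw [hset]
    rw [hindep.meas_biInter (fun x _ => ⟨{true}, measurableSet_singleton true, rfl⟩)]
    have hall : ∀ x ∈ (Finset.range (n + 1)).image (cpt a v), μ ((ξ x) ⁻¹' {true}) = D := by
      intro x _
      rw [← hlaw x]
      rfl
    rw [Finset.prod_congr rfl hall, Finset.prod_const,
      Finset.card_image_of_injOn hinj, Finset.card_range]
  case isFalse _ =>
    simp

lemma tsum_pi_fin (n : ℕ) (g : ℕ → ℝ≥0∞) :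
    ∑' v : Fin n → ℕ, ∏ j, g (v j) = (∑' d, g d) ^ n := by
  induction n with
  | zero =>
    rw [pow_zero]
    rw [tsum_eq_single (fun j => 0) (by intro b hb; exact absurd (Subsingleton.elim b _) hb)]
    simp
  | succ n ih =>
    have he := ((Fin.consEquiv (fun _ : Fin (n + 1) => ℕ)).tsum_eq (fun v : Fin (n + 1) → ℕ => ∏ j, g (v j)))
    rw [← he]
    have hsplit : ∀ q : ℕ × (Fin n → ℕ),
        (∏ j, g (((Fin.consEquiv (fun _ : Fin (n + 1) => ℕ)) q) j)) = g q.1 * ∏ j, g (q.2 j) := by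
      intro q
      rw [Fin.prod_univ_succ]
      simp [Fin.consEquiv]
    rw [tsum_congr hsplit, ENNReal.tsum_prod']
    have : ∀ d : ℕ, ∑' w : Fin n → ℕ, g d * ∏ j, g (w j) = g d * (∑' d', g d') ^ n := by
      intro d
      rw [ENNReal.tsum_mul_left, ih]
    rw [tsum_congr this, ENNReal.tsum_mul_right, pow_succ]
    ring

/-- The per-gap weight. -/
noncomputable def gw (L d : ℕ) : ℝ≥0∞ := if 1 ≤ d then (2 * (L : ℝ≥0∞))⁻¹ ^ (fexp L d) else 0

lemma two_L_ne_zero {L : ℕ} (hL : 3 ≤ L) : (2 * (L : ℝ≥0∞)) ≠ 0 := by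
  have : (L : ℝ≥0∞) ≠ 0 := by exact_mod_cast (by omega : L ≠ 0)
  simp [this]

lemma two_L_ne_top {L : ℕ} : (2 * (L : ℝ≥0∞)) ≠ ⊤ := by
  have : (L : ℝ≥0∞) ≠ ⊤ := ENNReal.natCast_ne_top L
  exact ENNReal.mul_ne_top (by simp) this

lemma gw_tsum_le {L : ℕ} (hL : 3 ≤ L) : ∑' d, gw L d ≤ 2 * (L : ℝ≥0∞) := by
  have hL0 : (L : ℝ≥0∞) ≠ 0 := by exact_mod_cast (by omega : L ≠ 0)
  have hLtop : (L : ℝ≥0∞) ≠ ⊤ := ENNReal.natCast_ne_top L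
  set x : ℝ≥0∞ := (2 * (L : ℝ≥0∞))⁻¹ with hx
  have hstep1 : ∀ d : ℕ, gw L d = ∑' k : ℕ, (if 1 ≤ d ∧ fexp L d = k then x ^ k else 0) := by
    intro d
    rw [tsum_eq_single (fexp L d) (by intro k hk; rw [if_neg]; rintro ⟨-, h⟩; exact hk h.symm)]
    by_cases h : 1 ≤ d
    · simp [gw, h, hx]
    · simp [gw, h]
  calc ∑' d, gw L d
      = ∑' (d : ℕ) (k : ℕ), (if 1 ≤ d ∧ fexp L d = k then x ^ k else 0) := tsum_congr hstep1
    _ = ∑' (k : ℕ) (d : ℕ), (if 1 ≤ d ∧ fexp L d = k then x ^ k else 0) := ENNReal.tsum_comm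
    _ ≤ ∑' k : ℕ, (L : ℝ≥0∞) ^ (k + 1) * x ^ k := by
        apply ENNReal.tsum_le_tsum
        intro k
        calc ∑' d : ℕ, (if 1 ≤ d ∧ fexp L d = k then x ^ k else 0)
            ≤ ∑' d : ℕ, (if d ∈ Finset.Icc 1 (L ^ (k + 1)) then x ^ k else 0) := by
              apply ENNReal.tsum_le_tsum
              intro d
              by_cases h : 1 ≤ d ∧ fexp L d = k
              · rw [if_pos h, if_pos]
                rw [Finset.mem_Icc]
                exact ⟨h.1, h.2 ▸ le_pow_fexp (by omega) d⟩
              · rw [if_neg h]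
                exact zero_le
          _ = ∑ d ∈ Finset.Icc 1 (L ^ (k + 1)), (if d ∈ Finset.Icc 1 (L ^ (k + 1)) then x ^ k else 0) :=
              tsum_eq_sum (by intro d hd; rw [if_neg hd])
          _ = ∑ d ∈ Finset.Icc 1 (L ^ (k + 1)), x ^ k :=
              Finset.sum_congr rfl (fun d hd => if_pos hd)
          _ = (L : ℝ≥0∞) ^ (k + 1) * x ^ k := by
              rw [Finset.sum_const, Nat.card_Icc, Nat.add_sub_cancel, nsmul_eq_mul]
              push_cast
              rfl
    _ = (L : ℝ≥0∞) * ∑' k : ℕ, ((L : ℝ≥0∞) * x) ^ k := by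
        rw [← ENNReal.tsum_mul_left]
        apply tsum_congr
        intro k
        rw [mul_pow, pow_succ]
        ring
    _ ≤ (L : ℝ≥0∞) * 2 := by
        have hLx : (L : ℝ≥0∞) * x = 2⁻¹ := by
          rw [hx, ENNReal.mul_inv (Or.inl (by norm_num)) (Or.inl (by norm_num))]
          rw [← mul_assoc, mul_comm (L : ℝ≥0∞) (2⁻¹ : ℝ≥0∞), mul_assoc,
            ENNReal.mul_inv_cancel hL0 hLtop, mul_one]
        rw [hLx, ENNReal.tsum_geometric]
        apply mul_le_mul_right
        rw [ENNReal.one_sub_inv_two]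
        norm_num
    _ = 2 * (L : ℝ≥0∞) := by ring

lemma nat_geom_sum {L : ℕ} (hL : 2 ≤ L) (K : ℕ) :
    ∑ m ∈ Finset.range (K + 1), L ^ m ≤ 2 * L ^ K := by
  induction K with
  | zero => simp
  | succ K ih =>
    rw [Finset.sum_range_succ]
    have h2 : 2 * L ^ K ≤ L ^ K * L := by
      rw [mul_comm (L ^ K) L]
      exact Nat.mul_le_mul_right _ hL
    rw [pow_succ] at *
    omega

lemma prod_gw_eq {L n : ℕ} (v : Fin n → ℕ) (hc1 : ∀ j, 1 ≤ v j) :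
    ∏ j : Fin n, gw L (v j)
      = (2 * (L : ℝ≥0∞))⁻¹ ^ (∑ j ∈ Finset.range n, fexp L (cgap v j)) := by
  have h1 : ∑ j ∈ Finset.range n, fexp L (cgap v j) = ∑ j : Fin n, fexp L (v j) := by
    rw [← Fin.sum_univ_eq_sum_range (fun j => fexp L (cgap v j)) n]
    apply Finset.sum_congr rfl
    intro j _
    congr 1
    simp [cgap, j.2]
  rw [h1, ← Finset.prod_pow_eq_pow_sum]
  apply Finset.prod_congr rfl
  intro j _
  rw [gw, if_pos (hc1 j)]

lemma msum_bound {L n : ℕ} (hL : 3 ≤ L) (v : Fin n → ℕ) :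
    (∑' m : ℕ, if ((∀ j, 1 ≤ v j) ∧
        m + ∑ j ∈ Finset.range n, fexp L (cgap v j) ≤ n + 1)
        then (L : ℝ≥0∞) ^ m else 0)
      ≤ 2 * (2 * (L : ℝ≥0∞)) ^ (n + 1) * ∏ j : Fin n, gw L (v j) := by
  have h2L0 := two_L_ne_zero hL
  have h2Ltop := @two_L_ne_top L
  by_cases hc1 : ∀ j, 1 ≤ v j
  · set F := ∑ j ∈ Finset.range n, fexp L (cgap v j) with hF
    have heq : (∑' m : ℕ, if ((∀ j, 1 ≤ v j) ∧ m + F ≤ n + 1)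
          then (L : ℝ≥0∞) ^ m else 0)
        = ∑ m ∈ Finset.range (n + 2 - F), (L : ℝ≥0∞) ^ m := by
      rw [tsum_eq_sum (s := Finset.range (n + 2 - F))
        (by intro m hm
            rw [Finset.mem_range] at hm
            rw [if_neg]
            rintro ⟨-, h⟩
            omega)]
      apply Finset.sum_congr rfl
      intro m hm
      rw [Finset.mem_range] at hm
      rw [if_pos ⟨hc1, by omega⟩]
    rw [heq]
    by_cases hFn : F ≤ n + 1
    · have hcast : ∑ m ∈ Finset.range (n + 2 - F), (L : ℝ≥0∞) ^ m
          ≤ 2 * (L : ℝ≥0∞) ^ (n + 1 - F) := by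
        have hnat := nat_geom_sum (by omega : 2 ≤ L) (n + 1 - F)
        rw [show n + 2 - F = (n + 1 - F) + 1 by omega]
        calc ∑ m ∈ Finset.range (n + 1 - F + 1), (L : ℝ≥0∞) ^ m
            = ((∑ m ∈ Finset.range (n + 1 - F + 1), L ^ m : ℕ) : ℝ≥0∞) := by push_cast; rfl
          _ ≤ ((2 * L ^ (n + 1 - F) : ℕ) : ℝ≥0∞) := by exact_mod_cast hnat
          _ = 2 * (L : ℝ≥0∞) ^ (n + 1 - F) := by push_cast; rfl
      refine le_trans hcast ?_
      rw [prod_gw_eq v hc1, ← hF]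
      have hsplit : (2 * (L : ℝ≥0∞)) ^ (n + 1) = (2 * (L : ℝ≥0∞)) ^ (n + 1 - F) * (2 * (L : ℝ≥0∞)) ^ F := by
        rw [← pow_add]
        congr 1
        omega
      rw [hsplit]
      have hcancel : (2 * (L : ℝ≥0∞)) ^ F * ((2 * (L : ℝ≥0∞))⁻¹) ^ F = 1 := by
        rw [← mul_pow, ENNReal.mul_inv_cancel h2L0 h2Ltop, one_pow]
      calc 2 * (L : ℝ≥0∞) ^ (n + 1 - F)
          ≤ 2 * (2 * (L : ℝ≥0∞)) ^ (n + 1 - F) := by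
            apply mul_le_mul_right
            apply pow_le_pow_left' ?_ _
            exact le_mul_of_one_le_left zero_le (by norm_num)
        _ = 2 * (2 * (L : ℝ≥0∞)) ^ (n + 1 - F) * ((2 * (L : ℝ≥0∞)) ^ F * ((2 * (L : ℝ≥0∞))⁻¹) ^ F) := by
            rw [hcancel, mul_one]
        _ = 2 * ((2 * (L : ℝ≥0∞)) ^ (n + 1 - F) * (2 * (L : ℝ≥0∞)) ^ F) * ((2 * (L : ℝ≥0∞))⁻¹) ^ F := by
            ring
    · have : n + 2 - F = 0 := by omega
      rw [this]
      simp
  · have heq0 : (∑' m : ℕ, if ((∀ j, 1 ≤ v j) ∧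
        m + ∑ j ∈ Finset.range n, fexp L (cgap v j) ≤ n + 1)
        then (L : ℝ≥0∞) ^ m else 0) = 0 := by
      rw [tsum_eq_single 0 (by intro m hm; rw [if_neg]; rintro ⟨h, -⟩; exact hc1 h)]
      rw [if_neg]
      rintro ⟨h, -⟩
      exact hc1 h
    rw [heq0]
    exact zero_le

lemma layer_bound {L : ℕ} (hL : 3 ≤ L) (D : ℝ≥0∞) (n : ℕ) :
    (∑' q : ℕ × ℕ × (Fin n → ℕ), (if AdmPar L ⟨n, q⟩ then D ^ (n + 1) else 0))
      ≤ 2 * (2 * (L : ℝ≥0∞)) ^ (2 * n + 1) * D ^ (n + 1) := by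
  have hstep1 : ∀ (m : ℕ) (v : Fin n → ℕ),
      (∑' a : ℕ, if AdmPar L ⟨n, (m, a, v)⟩ then D ^ (n + 1) else 0)
        = (if ((∀ j, 1 ≤ v j) ∧
            m + ∑ j ∈ Finset.range n, fexp L (cgap v j) ≤ n + 1)
          then (L : ℝ≥0∞) ^ m else 0) * D ^ (n + 1) := by
    intro m v
    by_cases hc : (∀ j, 1 ≤ v j) ∧ m + ∑ j ∈ Finset.range n, fexp L (cgap v j) ≤ n + 1
    · rw [if_pos hc]
      have hcond : ∀ a : ℕ, AdmPar L ⟨n, (m, a, v)⟩ ↔ a < L ^ m := by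
        intro a
        constructor
        · rintro ⟨-, h, -⟩; exact h
        · intro h; exact ⟨hc.1, h, hc.2⟩
      calc (∑' a : ℕ, if AdmPar L ⟨n, (m, a, v)⟩ then D ^ (n + 1) else 0)
          = ∑' a : ℕ, if a < L ^ m then D ^ (n + 1) else 0 := by
            apply tsum_congr; intro a
            by_cases h : a < L ^ m
            · rw [if_pos ((hcond a).2 h), if_pos h]
            · rw [if_neg (fun hA => h ((hcond a).1 hA)), if_neg h]
        _ = ∑ a ∈ Finset.range (L ^ m), D ^ (n + 1) := by
            rw [tsum_eq_sum (s := Finset.range (L ^ m))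
              (by intro a ha; rw [Finset.mem_range] at ha; rw [if_neg (by omega)])]
            apply Finset.sum_congr rfl
            intro a ha
            rw [Finset.mem_range] at ha
            rw [if_pos ha]
        _ = (L : ℝ≥0∞) ^ m * D ^ (n + 1) := by
            rw [Finset.sum_const, Finset.card_range, nsmul_eq_mul]
            push_cast
            rfl
    · rw [if_neg hc, zero_mul]
      rw [tsum_eq_single 0 ?_]
      · rw [if_neg]
        rintro ⟨h1, -, h2⟩
        exact hc ⟨h1, h2⟩
      · intro a ha
        rw [if_neg]
        rintro ⟨h1, -, h2⟩
        exact hc ⟨h1, h2⟩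
  calc (∑' q : ℕ × ℕ × (Fin n → ℕ), (if AdmPar L ⟨n, q⟩ then D ^ (n + 1) else 0))
      = ∑' (m : ℕ) (r : ℕ × (Fin n → ℕ)), (if AdmPar L ⟨n, (m, r)⟩ then D ^ (n + 1) else 0) :=
        ENNReal.tsum_prod'
    _ = ∑' (m : ℕ) (a : ℕ) (v : Fin n → ℕ), (if AdmPar L ⟨n, (m, a, v)⟩ then D ^ (n + 1) else 0) := by
        apply tsum_congr; intro m; exact ENNReal.tsum_prod'
    _ = ∑' (m : ℕ) (v : Fin n → ℕ) (a : ℕ), (if AdmPar L ⟨n, (m, a, v)⟩ then D ^ (n + 1) else 0) := by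
        apply tsum_congr; intro m; exact ENNReal.tsum_comm
    _ = ∑' (v : Fin n → ℕ) (m : ℕ) (a : ℕ), (if AdmPar L ⟨n, (m, a, v)⟩ then D ^ (n + 1) else 0) :=
        ENNReal.tsum_comm
    _ = ∑' v : Fin n → ℕ, (∑' m : ℕ, (if ((∀ j, 1 ≤ v j) ∧
            m + ∑ j ∈ Finset.range n, fexp L (cgap v j) ≤ n + 1)
          then (L : ℝ≥0∞) ^ m else 0)) * D ^ (n + 1) := by
        apply tsum_congr; intro v
        rw [← ENNReal.tsum_mul_right]
        apply tsum_congr; intro m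
        exact hstep1 m v
    _ ≤ ∑' v : Fin n → ℕ, (2 * (2 * (L : ℝ≥0∞)) ^ (n + 1) * ∏ j : Fin n, gw L (v j)) * D ^ (n + 1) := by
        apply ENNReal.tsum_le_tsum
        intro v
        exact mul_le_mul_left (msum_bound hL v) _
    _ = 2 * (2 * (L : ℝ≥0∞)) ^ (n + 1) * D ^ (n + 1) * ∑' v : Fin n → ℕ, ∏ j : Fin n, gw L (v j) := by
        rw [← ENNReal.tsum_mul_left]
        apply tsum_congr; intro v
        ring
    _ ≤ 2 * (2 * (L : ℝ≥0∞)) ^ (n + 1) * D ^ (n + 1) * (2 * (L : ℝ≥0∞)) ^ n := by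
        apply mul_le_mul_right
        rw [tsum_pi_fin n (gw L)]
        exact pow_le_pow_left' (gw_tsum_le hL) n
    _ = 2 * (2 * (L : ℝ≥0∞)) ^ (2 * n + 1) * D ^ (n + 1) := by
        rw [show 2 * n + 1 = (n + 1) + n by omega, pow_add]
        ring

lemma total_bound {L : ℕ} (hL : 3 ≤ L) (D : ℝ≥0∞)
    (hD : (2 * (L : ℝ≥0∞)) ^ 2 * D ≤ 2⁻¹) :
    (∑' p : ChainPar, (if AdmPar L p then D ^ (p.1 + 1) else 0))
      ≤ 8 * (L : ℝ≥0∞) * D := by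
  rw [ENNReal.tsum_sigma']
  calc (∑' (n : ℕ) (q : ℕ × ℕ × (Fin n → ℕ)), (if AdmPar L ⟨n, q⟩ then D ^ ((⟨n, q⟩ : ChainPar).1 + 1) else 0))
      ≤ ∑' n : ℕ, 2 * (2 * (L : ℝ≥0∞)) ^ (2 * n + 1) * D ^ (n + 1) := by
        apply ENNReal.tsum_le_tsum
        intro n
        exact layer_bound hL D n
    _ = ∑' n : ℕ, (4 * (L : ℝ≥0∞) * D) * ((2 * (L : ℝ≥0∞)) ^ 2 * D) ^ n := by
        apply tsum_congr; intro n
        rw [show 2 * n + 1 = 1 + 2 * n by omega, pow_add, pow_mul, mul_pow, pow_succ]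
        ring
    _ = (4 * (L : ℝ≥0∞) * D) * ∑' n : ℕ, ((2 * (L : ℝ≥0∞)) ^ 2 * D) ^ n := ENNReal.tsum_mul_left
    _ ≤ (4 * (L : ℝ≥0∞) * D) * ∑' n : ℕ, (2⁻¹ : ℝ≥0∞) ^ n := by
        apply mul_le_mul_right
        apply ENNReal.tsum_le_tsum
        intro n
        exact pow_le_pow_left' hD n
    _ = (4 * (L : ℝ≥0∞) * D) * 2 := by
        rw [ENNReal.tsum_geometric, ENNReal.one_sub_inv_two]
        norm_num
    _ = 8 * (L : ℝ≥0∞) * D := by ring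

end Prob



/-- If `δ > 0` and `3 ≤ L < (64δ)^{-1/2}`, then `P(χ(Γ) = 0) > 0`:
with positive probability every cluster `C ∈ C_∞` satisfies `d(C, 0) ≥ L^{m(C)}`. -/
theorem chi_zero_pos_prob (δ : ℝ) (L : ℕ) (hδ : 0 < δ) (hL3 : 3 ≤ L)
    (hLδ : (L : ℝ) < (Real.sqrt (64 * δ))⁻¹)
    {Ω : Type} [MeasurableSpace Ω] (μ : Measure Ω) [IsProbabilityMeasure μ]
    (ξ : ℕ → Ω → Bool) (hmeas : ∀ i, Measurable (ξ i))
    (hindep : iIndepFun ξ μ)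
    (hlaw : ∀ i, μ {ω | ξ i ω = true} = ENNReal.ofReal δ) :
    0 < μ {ω | ∀ H : ClusterHierarchy L {x | ξ x ω = true},
      ∀ c ∈ H.Cinf, L ^ H.mass c ≤ clDist c {0}} := by
  classical
  have hL2 : 2 ≤ L := by omega
  set D := ENNReal.ofReal δ with hD
  have hL3' : (3 : ℝ) ≤ (L : ℝ) := by exact_mod_cast hL3
  -- real-number bound 64 δ L² < 1
  have hs : 0 < Real.sqrt (64 * δ) := Real.sqrt_pos.2 (by linarith)
  have hmul : (L : ℝ) * Real.sqrt (64 * δ) < 1 := by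
    have h := mul_lt_mul_of_pos_right hLδ hs
    rwa [inv_mul_cancel₀ (ne_of_gt hs)] at h
  have hsqrtsq : Real.sqrt (64 * δ) ^ 2 = 64 * δ := Real.sq_sqrt (by linarith)
  have hLδ2 : 64 * δ * (L : ℝ) ^ 2 < 1 := by
    have h0 : 0 ≤ (L : ℝ) * Real.sqrt (64 * δ) := by positivity
    nlinarith [hmul, hsqrtsq]
  -- ENNReal bound (2L)² D ≤ 2⁻¹
  have hcast : ∀ c : ℝ, 0 ≤ c → ENNReal.ofReal (c * δ) = ENNReal.ofReal c * D := by
    intro c hc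
    rw [hD, ENNReal.ofReal_mul hc]
  have hDb : (2 * (L : ℝ≥0∞)) ^ 2 * D ≤ 2⁻¹ := by
    have h1 : (2 * (L : ℝ≥0∞)) ^ 2 = ENNReal.ofReal (4 * (L : ℝ) ^ 2) := by
      rw [show (4 : ℝ) * (L : ℝ) ^ 2 = (2 * (L : ℝ)) ^ 2 by ring]
      rw [ENNReal.ofReal_pow (by positivity)]
      congr 1
      rw [ENNReal.ofReal_mul (by norm_num)]
      rw [ENNReal.ofReal_natCast, ENNReal.ofReal_ofNat]
    rw [h1, ← hcast _ (by positivity)]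
    have h2 : 4 * (L : ℝ) ^ 2 * δ ≤ 1 / 2 := by nlinarith [hLδ2, hδ]
    calc ENNReal.ofReal (4 * (L : ℝ) ^ 2 * δ) ≤ ENNReal.ofReal (1 / 2) :=
          ENNReal.ofReal_le_ofReal h2
      _ = 2⁻¹ := by
          rw [one_div, ENNReal.ofReal_inv_of_pos (by norm_num), ENNReal.ofReal_ofNat]
  -- the bad event
  have hBadMeas : MeasurableSet (⋃ p : ChainPar, cev ξ L p) :=
    MeasurableSet.iUnion (fun p => cev_measurable ξ hmeas L p)
  have hBadBound : μ (⋃ p : ChainPar, cev ξ L p) ≤ 8 * (L : ℝ≥0∞) * D := by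
    calc μ (⋃ p : ChainPar, cev ξ L p) ≤ ∑' p : ChainPar, μ (cev ξ L p) :=
          measure_iUnion_le _
      _ ≤ ∑' p : ChainPar, (if AdmPar L p then D ^ (p.1 + 1) else 0) := by
          apply ENNReal.tsum_le_tsum
          intro p
          by_cases h : AdmPar L p
          · rw [if_pos h]
            exact cev_meas μ ξ hindep D hlaw p
          · rw [if_neg h]
            unfold cev
            rw [if_neg h]
            simp
      _ ≤ 8 * (L : ℝ≥0∞) * D := total_bound hL3 D hDb
  have hBadLt : μ (⋃ p : ChainPar, cev ξ L p) < 1 := by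
    refine lt_of_le_of_lt hBadBound ?_
    have h8 : (8 : ℝ) * (L : ℝ) * δ < 1 := by nlinarith [hLδ2, hδ, hL3']
    have h9 : 8 * (L : ℝ≥0∞) * D = ENNReal.ofReal (8 * (L : ℝ) * δ) := by
      rw [hcast _ (by positivity)]
      congr 1
      rw [ENNReal.ofReal_mul (by norm_num), ENNReal.ofReal_natCast, ENNReal.ofReal_ofNat]
    rw [h9]
    exact ENNReal.ofReal_lt_one.2 h8
  have hcompl : 0 < μ (⋃ p : ChainPar, cev ξ L p)ᶜ := by
    rw [prob_compl_eq_one_sub hBadMeas]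
    exact tsub_pos_of_lt hBadLt
  refine lt_of_lt_of_le hcompl (measure_mono ?_)
  intro ω hω
  rw [Set.mem_compl_iff, Set.mem_iUnion] at hω
  push_neg at hω
  exact good_of_not_bad hL2 ξ ω hω
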